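/- For all integers d, t, n with d ≥ 2, n ≥ 2 and 1 ≤ t ≤ min(d, n), the domination number of the undirected t-constrained de Bruijn graph satisfies γ(cDB(d,t,n)) ≥ ⌈ d! · (d−t+1)^{n−t} / ((d−t)! · (2d−2t+3)) ⌉. -/

import Mathlib

/-- A sequence `x` of length `n` over the alphabet `Fin d` is `t`-constrained if
equal symbols occur at positions at distance at least `t`. -/
def dbConstrained (d t n : ℕ) (x : Fin n → Fin d) : Prop :=
  ∀ i j : Fin n, i < j → x i = x j → t ≤ (j : ℕ) - (i : ℕ)

/-- The vertex set `V(d,t,n)` of the `t`-constrained de Bruijn graph: all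
`t`-constrained sequences of length `n` over a `d`-letter alphabet. -/
abbrev dbVtx (d t n : ℕ) : Type := {x : Fin n → Fin d // dbConstrained d t n x}

/-- `dbShift x y` holds when there is a directed de Bruijn edge from `x` to `y`,
i.e. `y` is obtained from `x` by deleting its first symbol and appending a new
last symbol. -/
def dbShift {d t n : ℕ} (x y : dbVtx d t n) : Prop :=
  ∀ (i : Fin n) (h : (i : ℕ) + 1 < n), y.val i = x.val ⟨(i : ℕ) + 1, h⟩

/-- `S` is a dominating set of the directed `t`-constrained de Bruijn graph
`cDB⁺(d,t,n)`: every vertex is dominated by (equal to, or an out-neighbor of)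
some element of `S`. -/
def dbDirDominating {d t n : ℕ} (S : Set (dbVtx d t n)) : Prop :=
  ∀ v : dbVtx d t n, ∃ s ∈ S, s = v ∨ dbShift s v

/-- The domination number `γ(cDB⁺(d,t,n))` of the directed `t`-constrained
de Bruijn graph. -/
noncomputable def gammaDir (d t n : ℕ) : ℕ :=
  sInf {k | ∃ S : Set (dbVtx d t n), S.Finite ∧ S.ncard = k ∧ dbDirDominating S}

/-- Adjacency in the undirected `t`-constrained de Bruijn graph `cDB(d,t,n)`:
edge directions are ignored and loops are removed. -/
def dbAdj {d t n : ℕ} (x y : dbVtx d t n) : Prop :=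
  x ≠ y ∧ (dbShift x y ∨ dbShift y x)

/-- `S` is a dominating set of the undirected graph `cDB(d,t,n)`: every vertex
is dominated by (equal to, or adjacent to) some element of `S`. -/
def dbUndirDominating {d t n : ℕ} (S : Set (dbVtx d t n)) : Prop :=
  ∀ v : dbVtx d t n, ∃ s ∈ S, s = v ∨ dbAdj s v

/-- The domination number `γ(cDB(d,t,n))` of the undirected `t`-constrained
de Bruijn graph. -/
noncomputable def gammaUndir (d t n : ℕ) : ℕ :=
  sInf {k | ∃ S : Set (dbVtx d t n), S.Finite ∧ S.ncard = k ∧ dbUndirDominating S}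


instance (d t n : ℕ) : DecidablePred (dbConstrained d t n) := fun x => by
  unfold dbConstrained; infer_instance

instance (d t n : ℕ) : Fintype (dbVtx d t n) := Subtype.fintype _

lemma card_dbVtx_base (d t : ℕ) :
    Fintype.card (dbVtx d t t) = d.descFactorial t := by
  have e1 : dbVtx d t t ≃ {f : Fin t → Fin d // Function.Injective f} := by
    apply Equiv.subtypeEquivRight
    intro x
    constructor
    · intro hc i j hij
      rcases lt_trichotomy i j with h | h | h
      · have := hc i j h hij
        omega
      · exact h
      · have := hc j i h hij.symm
        omega
    · intro hinj i j hij hx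
      exact absurd (hinj hx) hij.ne
  rw [Fintype.card_congr e1,
    Fintype.card_congr (Equiv.subtypeInjectiveEquivEmbedding (Fin t) (Fin d)),
    Fintype.card_embedding_eq]
  simp

/-- Truncation: drop the last symbol. -/
def dbTrunc {d t n : ℕ} (y : dbVtx d t (n+1)) : dbVtx d t n :=
  ⟨fun i => y.val i.castSucc, by
    intro i j hij hx
    have := y.2 i.castSucc j.castSucc (by simpa using hij) hx
    simpa using this⟩

def dbStepEquiv (d t n : ℕ) (htn : t ≤ n) :
    dbVtx d t (n+1) ≃
      Σ x : dbVtx d t n, {a : Fin d // ∀ i : Fin n, (n : ℕ) - t < (i : ℕ) → x.val i ≠ a} where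
  toFun y := ⟨dbTrunc y, ⟨y.val (Fin.last n), by
    intro i hi heq
    have := y.2 i.castSucc (Fin.last n) (Fin.castSucc_lt_last i) heq
    simp only [Fin.coe_castSucc, Fin.val_last] at this
    have hi' : (i : ℕ) < n := i.2
    omega⟩⟩
  invFun p := ⟨fun i => if h : (i : ℕ) < n then p.1.val ⟨i, h⟩ else p.2.val, by
    intro i j hij heq
    have hij' : (i : ℕ) < (j : ℕ) := hij
    have hj : (j : ℕ) < n + 1 := j.2
    by_cases hjn : (j : ℕ) < n
    · have hin : (i : ℕ) < n := lt_trans hij' hjn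
      simp only at heq
      rw [dif_pos hin, dif_pos hjn] at heq
      exact p.1.2 ⟨i, hin⟩ ⟨j, hjn⟩ (by simpa using hij') heq
    · have hjn' : (j : ℕ) = n := by omega
      have hin : (i : ℕ) < n := by omega
      simp only at heq
      rw [dif_pos hin, dif_neg (by omega)] at heq
      by_contra hcon
      exact p.2.2 ⟨i, hin⟩ (by simp only [Fin.val_mk]; omega) heq⟩
  left_inv y := by
    apply Subtype.ext
    funext i
    dsimp [dbTrunc]
    split_ifs with h
    · congr 1
    · have hi : i = Fin.last n := Fin.ext (by have := i.2; simp only [Fin.val_last]; omega)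
      rw [hi]
  right_inv p := by
    rcases p with ⟨x, a, ha⟩
    apply Sigma.subtype_ext
    · apply Subtype.ext
      funext i
      dsimp [dbTrunc]
      rw [if_pos i.2]
    · dsimp
      rw [dif_neg (by simp)]

lemma fiber_card (d t n : ℕ) (ht1 : 1 ≤ t) (htd : t ≤ d) (htn : t ≤ n) (x : dbVtx d t n) :
    Fintype.card {a : Fin d // ∀ i : Fin n, (n : ℕ) - t < (i : ℕ) → x.val i ≠ a}
      = d - t + 1 := by
  set g : Fin (t - 1) → Fin d := fun k => x.val ⟨n - 1 - (k : ℕ), by omega⟩ with hg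
  have hginj : Function.Injective g := by
    intro k k' hkk
    by_contra hne
    have hne' : (k : ℕ) ≠ (k' : ℕ) := fun h => hne (Fin.ext h)
    have hk := k.2
    have hk' := k'.2
    rcases Nat.lt_or_ge (k : ℕ) (k' : ℕ) with h | h
    · have := x.2 ⟨n - 1 - (k' : ℕ), by omega⟩ ⟨n - 1 - (k : ℕ), by omega⟩
        (by simp only [Fin.mk_lt_mk]; omega) hkk.symm
      simp only [Fin.val_mk] at this
      omega
    · have h' : (k' : ℕ) < (k : ℕ) := by omega
      have := x.2 ⟨n - 1 - (k : ℕ), by omega⟩ ⟨n - 1 - (k' : ℕ), by omega⟩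
        (by simp only [Fin.mk_lt_mk]; omega) hkk
      simp only [Fin.val_mk] at this
      omega
  have e : {a : Fin d // ∀ i : Fin n, (n : ℕ) - t < (i : ℕ) → x.val i ≠ a}
      ≃ {a : Fin d // ∀ k : Fin (t - 1), g k ≠ a} := by
    apply Equiv.subtypeEquivRight
    intro a
    constructor
    · intro h k
      have hk := k.2
      exact h ⟨n - 1 - (k : ℕ), by omega⟩ (by simp only [Fin.val_mk]; omega)
    · intro h i hi heq
      have hi2 := i.2
      have hk : n - 1 - (i : ℕ) < t - 1 := by omega
      have : g ⟨n - 1 - (i : ℕ), hk⟩ = a := by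
        rw [hg]
        have : n - 1 - (n - 1 - (i : ℕ)) = (i : ℕ) := by omega
        simp only [Fin.val_mk, this]
        rw [← heq]
      exact h _ this
  rw [Fintype.card_congr e, Fintype.card_subtype]
  have hfilter : (Finset.univ.filter fun a : Fin d => ∀ k : Fin (t - 1), g k ≠ a)
      = (Finset.univ.image g)ᶜ := by
    ext a
    simp [eq_comm]
  rw [hfilter, Finset.card_compl, Finset.card_image_of_injective _ hginj]
  simp only [Finset.card_univ, Fintype.card_fin]
  omega

lemma card_dbVtx_succ (d t n : ℕ) (ht1 : 1 ≤ t) (htd : t ≤ d) (htn : t ≤ n) :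
    Fintype.card (dbVtx d t (n + 1)) = Fintype.card (dbVtx d t n) * (d - t + 1) := by
  rw [Fintype.card_congr (dbStepEquiv d t n htn), Fintype.card_sigma]
  have : ∀ x : dbVtx d t n,
      Fintype.card {a : Fin d // ∀ i : Fin n, (n : ℕ) - t < (i : ℕ) → x.val i ≠ a}
        = d - t + 1 := fiber_card d t n ht1 htd htn
  simp only [this, Finset.sum_const, Finset.card_univ, smul_eq_mul]

lemma card_dbVtx (d t : ℕ) (ht1 : 1 ≤ t) (htd : t ≤ d) :
    ∀ n, t ≤ n →
      (d - t).factorial * Fintype.card (dbVtx d t n)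
        = d.factorial * (d - t + 1) ^ (n - t) := by
  refine Nat.le_induction ?_ ?_
  · rw [card_dbVtx_base, Nat.factorial_mul_descFactorial htd, Nat.sub_self, pow_zero, mul_one]
  · intro n htn ih
    rw [card_dbVtx_succ d t n ht1 htd htn, ← mul_assoc, ih]
    have h1 : n + 1 - t = (n - t) + 1 := by omega
    rw [h1, pow_succ, mul_assoc]

instance {d t n : ℕ} (x y : dbVtx d t n) : Decidable (dbShift x y) := by
  unfold dbShift; infer_instance


instance {d t n : ℕ} (x y : dbVtx d t n) : Decidable (dbAdj x y) := by
  unfold dbAdj; infer_instance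

/-- Two positions within a window of length `< t` carry distinct symbols. -/
lemma dbVtx_window_ne {d t n : ℕ} (x : dbVtx d t n) {i j : Fin n} (hij : (i : ℕ) ≠ (j : ℕ))
    (h1 : (j : ℕ) - (i : ℕ) < t) (h2 : (i : ℕ) - (j : ℕ) < t) : x.val i ≠ x.val j := by
  intro h
  rcases Nat.lt_or_ge (i : ℕ) (j : ℕ) with hlt | hge
  · have := x.2 i j hlt h
    omega
  · have hlt : j < i := by omega
    have := x.2 j i hlt h.symm
    omega

lemma out_card {d t n : ℕ} (ht1 : 1 ≤ t) (htd : t ≤ d) (htn : t ≤ n) (hn : 2 ≤ n)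
    (s : dbVtx d t n) :
    (Finset.univ.filter fun v : dbVtx d t n => dbShift s v).card ≤ d - t + 1 := by
  set g : Fin (t - 1) → Fin d := fun k => s.val ⟨n - 1 - (k : ℕ), by omega⟩ with hg
  have hginj : Function.Injective g := by
    intro k k' hkk
    have hk := k.2
    have hk' := k'.2
    by_contra hne
    exact dbVtx_window_ne s (i := ⟨n - 1 - (k : ℕ), by omega⟩) (j := ⟨n - 1 - (k' : ℕ), by omega⟩)
      (by simp only [Fin.val_mk]; omega) (by simp only [Fin.val_mk]; omega)
      (by simp only [Fin.val_mk]; omega) hkk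
  have hcard : ((Finset.univ.image g)ᶜ : Finset (Fin d)).card = d - t + 1 := by
    rw [Finset.card_compl, Finset.card_image_of_injective _ hginj]
    simp only [Finset.card_univ, Fintype.card_fin]
    omega
  rw [← hcard]
  apply Finset.card_le_card_of_injOn (fun v => v.val ⟨n - 1, by omega⟩)
  · intro v hv
    simp only [Finset.mem_coe, Finset.mem_filter] at hv
    have hsh := hv.2
    simp only [Finset.mem_coe, Finset.mem_compl, Finset.mem_image, not_exists]
    intro k
    simp only [Finset.mem_univ, true_and]
    intro hcontra
    have hk := k.2
    -- s ⟨n-1-k⟩ = v ⟨n-2-k⟩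
    have h1 : s.val ⟨n - 1 - (k : ℕ), by omega⟩ = v.val ⟨n - 2 - (k : ℕ), by omega⟩ := by
      have h2 := hsh ⟨n - 2 - (k : ℕ), by omega⟩ (by simp only [Fin.val_mk]; omega)
      simp only [Fin.val_mk] at h2
      have e : (⟨n - 2 - (k : ℕ) + 1, by omega⟩ : Fin n) = ⟨n - 1 - (k : ℕ), by omega⟩ :=
        Fin.ext (by simp only [Fin.val_mk]; omega)
      exact e ▸ h2.symm
    rw [hg] at hcontra
    simp only at hcontra
    rw [h1] at hcontra
    exact dbVtx_window_ne v (i := ⟨n - 2 - (k : ℕ), by omega⟩) (j := ⟨n - 1, by omega⟩)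
      (by simp only [Fin.val_mk]; omega) (by simp only [Fin.val_mk]; omega)
      (by simp only [Fin.val_mk]; omega) hcontra
  · intro v hv v' hv' hf
    simp only [Finset.coe_filter, Set.mem_setOf_eq, Finset.mem_univ, true_and] at hv hv'
    apply Subtype.ext
    funext i
    by_cases h : (i : ℕ) + 1 < n
    · rw [hv i h, hv' i h]
    · have : i = ⟨n - 1, by omega⟩ := Fin.ext (by have := i.2; simp only [Fin.val_mk]; omega)
      rw [this]
      exact hf

lemma in_card {d t n : ℕ} (ht1 : 1 ≤ t) (htd : t ≤ d) (htn : t ≤ n) (hn : 2 ≤ n)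
    (s : dbVtx d t n) :
    (Finset.univ.filter fun v : dbVtx d t n => dbShift v s).card ≤ d - t + 1 := by
  set g : Fin (t - 1) → Fin d := fun k => s.val ⟨(k : ℕ), by have := k.2; omega⟩ with hg
  have hginj : Function.Injective g := by
    intro k k' hkk
    have hk := k.2
    have hk' := k'.2
    by_contra hne
    have hne' : (k : ℕ) ≠ (k' : ℕ) := fun h => hne (Fin.ext h)
    exact dbVtx_window_ne s (i := ⟨(k : ℕ), by omega⟩) (j := ⟨(k' : ℕ), by omega⟩)
      (by simp only [Fin.val_mk]; omega) (by simp only [Fin.val_mk]; omega)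
      (by simp only [Fin.val_mk]; omega) hkk
  have hcard : ((Finset.univ.image g)ᶜ : Finset (Fin d)).card = d - t + 1 := by
    rw [Finset.card_compl, Finset.card_image_of_injective _ hginj]
    simp only [Finset.card_univ, Fintype.card_fin]
    omega
  rw [← hcard]
  apply Finset.card_le_card_of_injOn (fun v => v.val ⟨0, by omega⟩)
  · intro v hv
    simp only [Finset.mem_coe, Finset.mem_filter] at hv
    have hsh := hv.2
    simp only [Finset.mem_coe, Finset.mem_compl, Finset.mem_image, not_exists]
    intro k
    simp only [Finset.mem_univ, true_and]
    intro hcontra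
    have hk := k.2
    -- s ⟨k⟩ = v ⟨k+1⟩
    have h1 : s.val ⟨(k : ℕ), by omega⟩ = v.val ⟨(k : ℕ) + 1, by omega⟩ := by
      exact hsh ⟨(k : ℕ), by omega⟩ (by simp only [Fin.val_mk]; omega)
    rw [hg] at hcontra
    simp only at hcontra
    rw [h1] at hcontra
    exact dbVtx_window_ne v (i := ⟨(k : ℕ) + 1, by omega⟩) (j := ⟨0, by omega⟩)
      (by simp only [Fin.val_mk]; omega) (by simp only [Fin.val_mk]; omega)
      (by simp only [Fin.val_mk]; omega) hcontra
  · intro v hv v' hv' hf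
    simp only [Finset.coe_filter, Set.mem_setOf_eq, Finset.mem_univ, true_and] at hv hv'
    apply Subtype.ext
    funext i
    by_cases h : (i : ℕ) = 0
    · have : i = ⟨0, by omega⟩ := Fin.ext (by simp only [Fin.val_mk]; omega)
      rw [this]
      exact hf
    · have hi := i.2
      have e : (⟨(⟨(i : ℕ) - 1, by omega⟩ : Fin n).val + 1, by simp only [Fin.val_mk]; omega⟩ : Fin n) = i :=
        Fin.ext (by simp only [Fin.val_mk]; omega)
      have h1 := hv ⟨(i : ℕ) - 1, by omega⟩ (by simp only [Fin.val_mk]; omega)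
      have h2 := hv' ⟨(i : ℕ) - 1, by omega⟩ (by simp only [Fin.val_mk]; omega)
      exact (congrArg v.val e.symm).trans (h1.symm.trans (h2.trans (congrArg v'.val e)))

lemma dom_card {d t n : ℕ} (ht1 : 1 ≤ t) (htd : t ≤ d) (htn : t ≤ n) (hn : 2 ≤ n)
    (s : dbVtx d t n) :
    (Finset.univ.filter fun v : dbVtx d t n => s = v ∨ dbAdj s v).card
      ≤ 2 * d - 2 * t + 3 := by
  have hsub : (Finset.univ.filter fun v : dbVtx d t n => s = v ∨ dbAdj s v)
      ⊆ {s} ∪ (Finset.univ.filter fun v => dbShift s v)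
          ∪ (Finset.univ.filter fun v => dbShift v s) := by
    intro v hv
    simp only [Finset.mem_filter, Finset.mem_univ, true_and] at hv
    simp only [Finset.mem_union, Finset.mem_singleton, Finset.mem_filter, Finset.mem_univ,
      true_and]
    rcases hv with rfl | ⟨_, h | h⟩
    · exact Or.inl (Or.inl rfl)
    · exact Or.inl (Or.inr h)
    · exact Or.inr h
  have h1 := out_card ht1 htd htn hn s
  have h2 := in_card ht1 htd htn hn s
  calc (Finset.univ.filter fun v : dbVtx d t n => s = v ∨ dbAdj s v).card
      ≤ ({s} ∪ (Finset.univ.filter fun v => dbShift s v)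
          ∪ (Finset.univ.filter fun v => dbShift v s)).card := Finset.card_le_card hsub
    _ ≤ ({s} ∪ (Finset.univ.filter fun v => dbShift s v)).card
          + (Finset.univ.filter fun v : dbVtx d t n => dbShift v s).card :=
        Finset.card_union_le _ _
    _ ≤ (({s} : Finset (dbVtx d t n)).card
          + (Finset.univ.filter fun v : dbVtx d t n => dbShift s v).card)
          + (Finset.univ.filter fun v : dbVtx d t n => dbShift v s).card := by
        exact Nat.add_le_add_right (Finset.card_union_le _ _) _
    _ ≤ (1 + (d - t + 1)) + (d - t + 1) := by
        apply Nat.add_le_add _ h2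
        apply Nat.add_le_add _ h1
        simp
    _ ≤ 2 * d - 2 * t + 3 := by omega

lemma dom_bound {d t n : ℕ} (ht1 : 1 ≤ t) (htd : t ≤ d) (htn : t ≤ n) (hn : 2 ≤ n)
    (S : Set (dbVtx d t n)) (hfin : S.Finite) (hdom : dbUndirDominating S) :
    Fintype.card (dbVtx d t n) ≤ S.ncard * (2 * d - 2 * t + 3) := by
  have hsub : (Finset.univ : Finset (dbVtx d t n))
      ⊆ hfin.toFinset.biUnion
          (fun s => Finset.univ.filter fun v => s = v ∨ dbAdj s v) := by
    intro v _
    obtain ⟨s, hs, h⟩ := hdom v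
    exact Finset.mem_biUnion.2 ⟨s, hfin.mem_toFinset.2 hs, by
      simp only [Finset.mem_filter, Finset.mem_univ, true_and]; exact h⟩
  calc Fintype.card (dbVtx d t n)
      = (Finset.univ : Finset (dbVtx d t n)).card := (Finset.card_univ).symm
    _ ≤ (hfin.toFinset.biUnion
          (fun s => Finset.univ.filter fun v => s = v ∨ dbAdj s v)).card :=
        Finset.card_le_card hsub
    _ ≤ ∑ s ∈ hfin.toFinset,
          (Finset.univ.filter fun v => s = v ∨ dbAdj s v).card :=
        Finset.card_biUnion_le
    _ ≤ ∑ _s ∈ hfin.toFinset, (2 * d - 2 * t + 3) :=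
        Finset.sum_le_sum (fun s _ => dom_card ht1 htd htn hn s)
    _ = hfin.toFinset.card * (2 * d - 2 * t + 3) := by
        rw [Finset.sum_const, smul_eq_mul]
    _ = S.ncard * (2 * d - 2 * t + 3) := by
        rw [Set.ncard_eq_toFinset_card S hfin]


/-- `γ(cDB(d,t,n)) ≥ ⌈d! * (d-t+1)^(n-t) / ((d-t)! * (2d-2t+3))⌉`. -/
theorem gammaUndir_lower (d t n : ℕ) (hd : 2 ≤ d) (hn : 2 ≤ n)
    (ht1 : 1 ≤ t) (htd : t ≤ d) (htn : t ≤ n) :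
    ⌈((d.factorial * (d - t + 1) ^ (n - t) : ℕ) : ℚ) /
      (((d - t).factorial * (2 * d - 2 * t + 3) : ℕ) : ℚ)⌉₊ ≤ gammaUndir d t n := by
  set N := Fintype.card (dbVtx d t n) with hN
  have hA : (d - t).factorial * N = d.factorial * (d - t + 1) ^ (n - t) :=
    card_dbVtx d t ht1 htd n htn
  have hne : {k | ∃ S : Set (dbVtx d t n), S.Finite ∧ S.ncard = k
      ∧ dbUndirDominating S}.Nonempty := by
    refine ⟨N, Set.univ, Set.finite_univ, ?_, fun v => ⟨v, trivial, Or.inl rfl⟩⟩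
    rw [Set.ncard_univ, Nat.card_eq_fintype_card]
  have hmem : ∃ S : Set (dbVtx d t n), S.Finite ∧ S.ncard = gammaUndir d t n
      ∧ dbUndirDominating S := Nat.sInf_mem hne
  obtain ⟨S, hfin, hcard, hdom⟩ := hmem
  have hB : N ≤ gammaUndir d t n * (2 * d - 2 * t + 3) := by
    rw [← hcard]
    exact dom_bound ht1 htd htn hn S hfin hdom
  have hnat : d.factorial * (d - t + 1) ^ (n - t)
      ≤ gammaUndir d t n * ((d - t).factorial * (2 * d - 2 * t + 3)) := by
    calc d.factorial * (d - t + 1) ^ (n - t) = (d - t).factorial * N := hA.symm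
      _ ≤ (d - t).factorial * (gammaUndir d t n * (2 * d - 2 * t + 3)) :=
          Nat.mul_le_mul_left _ hB
      _ = gammaUndir d t n * ((d - t).factorial * (2 * d - 2 * t + 3)) := by ring
  rw [Nat.ceil_le, div_le_iff₀]
  · exact_mod_cast hnat
  · have : 0 < (d - t).factorial * (2 * d - 2 * t + 3) :=
      Nat.mul_pos (Nat.factorial_pos _) (by omega)
    exact_mod_cast this
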